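/- (Theorem 1, case (a).) Suppose V : ℝ^{2n} → ℝ is C¹, nonnegative, radially unbounded (V(x) → ∞ as ‖x‖ → ∞), and satisfies the HJB equation, and suppose Q is continuous and positive definite (Q(0)=0 and Q(x) > 0 for x ≠ 0). Then the origin of the closed-loop system ẋ = F(x) + G(x)u*(x) is globally asymptotically stable: (i) for every ε > 0 there exists δ > 0 such that every closed-loop solution with ‖φ(0)‖ < δ satisfies ‖φ(t)‖ < ε for all t ≥ 0, and (ii) every closed-loop solution satisfies φ(t) → 0 as t → ∞. -/

import Mathlib

open Matrix MeasureTheory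

noncomputable section

/-- State space of the second-order plant: `x = (p, q)` with `p, q ∈ ℝⁿ`. -/
abbrev XSp (n : ℕ) := (Fin n → ℝ) × (Fin n → ℝ)

/-- Drift vector field `F(x) = (q, f(x))`. -/
def Fvec {n : ℕ} (f : XSp n → Fin n → ℝ) (x : XSp n) : XSp n := (x.2, f x)

/-- Action of the control effectiveness matrix `G(x) = (0, g(x))` on `u`. -/
def Gapp {n m : ℕ} (g : XSp n → Matrix (Fin n) (Fin m) ℝ) (x : XSp n)
    (u : Fin m → ℝ) : XSp n := (0, (g x).mulVec u)

/-- The `j`-th column of `G(x) = (0, g(x))`. -/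
def Gcol {n m : ℕ} (g : XSp n → Matrix (Fin n) (Fin m) ℝ) (x : XSp n)
    (j : Fin m) : XSp n := (0, fun i => g x i j)

/-- The optimal feedback `u*(x) = -(1/2) R⁻¹ G(x)ᵀ ∇V(x)ᵀ`. -/
def uStar {n m : ℕ} (g : XSp n → Matrix (Fin n) (Fin m) ℝ)
    (R : Matrix (Fin m) (Fin m) ℝ) (V : XSp n → ℝ) (x : XSp n) : Fin m → ℝ :=
  (-(1 / 2 : ℝ)) • R⁻¹.mulVec (fun j => fderiv ℝ V x (Gcol g x j))

/-- `V` satisfies the Hamilton–Jacobi–Bellman equation: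
`∇V(x)·(F(x) + G(x)u*(x)) + Q(x) + u*(x)ᵀ R u*(x) = 0` for all `x`. -/
def SatisfiesHJB {n m : ℕ} (f : XSp n → Fin n → ℝ)
    (g : XSp n → Matrix (Fin n) (Fin m) ℝ) (Q : XSp n → ℝ)
    (R : Matrix (Fin m) (Fin m) ℝ) (V : XSp n → ℝ) : Prop :=
  ∀ x : XSp n,
    fderiv ℝ V x (Fvec f x + Gapp g x (uStar g R V x)) + Q x
      + uStar g R V x ⬝ᵥ R.mulVec (uStar g R V x) = 0

/-- `φ` is a closed-loop solution on `[0,∞)` under the feedback `u`. -/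
def IsClosedLoopSol {n m : ℕ} (f : XSp n → Fin n → ℝ)
    (g : XSp n → Matrix (Fin n) (Fin m) ℝ) (u : XSp n → Fin m → ℝ)
    (φ : ℝ → XSp n) : Prop :=
  ∀ t ∈ Set.Ici (0 : ℝ),
    HasDerivWithinAt φ (Fvec f (φ t) + Gapp g (φ t) (u (φ t))) (Set.Ici 0) t

/-- Auxiliary: a real function with nonpositive derivative on `[0,∞)` is antitone there. -/
lemma antitoneOn_aux {ψ d : ℝ → ℝ}
    (h : ∀ t ∈ Set.Ici (0 : ℝ), HasDerivWithinAt ψ (d t) (Set.Ici 0) t)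
    (hd : ∀ t ∈ Set.Ici (0 : ℝ), d t ≤ 0) :
    AntitoneOn ψ (Set.Ici 0) := by
  have hcont : ContinuousOn ψ (Set.Ici 0) := fun t ht => (h t ht).continuousWithinAt
  have hint : ∀ t ∈ interior (Set.Ici (0 : ℝ)), HasDerivAt ψ (d t) t := by
    intro t ht
    rw [interior_Ici] at ht
    exact (h t (Set.mem_Ici.2 (le_of_lt ht))).hasDerivAt (Ici_mem_nhds ht)
  refine antitoneOn_of_deriv_nonpos (convex_Ici 0) hcont
    (fun t ht => (hint t ht).differentiableAt.differentiableWithinAt) ?_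
  intro t ht
  rw [(hint t ht).deriv]
  rw [interior_Ici] at ht
  exact hd t (Set.mem_Ici.2 (le_of_lt ht))

/-- Theorem 1, case (a): if `V` is a nonnegative, radially
unbounded C¹ solution of the HJB equation and `Q` is positive definite, then
the origin of the closed-loop system is globally asymptotically stable. -/
theorem optimal_feedback_GAS_case_a
    {n m : ℕ} (f : XSp n → Fin n → ℝ) (hf : LocallyLipschitz f)
    (hf0 : f 0 = 0)
    (g : XSp n → Matrix (Fin n) (Fin m) ℝ)
    (hg : LocallyLipschitz (fun x i j => g x i j))
    (Q : XSp n → ℝ) (hQcont : Continuous Q)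
    (hQ0 : Q 0 = 0) (hQpos : ∀ x : XSp n, x ≠ 0 → 0 < Q x)
    (R : Matrix (Fin m) (Fin m) ℝ) (hR : R.PosDef)
    (V : XSp n → ℝ) (hV : ContDiff ℝ 1 V)
    (hVnonneg : ∀ x, 0 ≤ V x)
    (hVrad : ∀ c : ℝ, ∃ r : ℝ, ∀ x : XSp n, r ≤ ‖x‖ → c ≤ V x)
    (hHJB : SatisfiesHJB f g Q R V) :
    (∀ ε > (0 : ℝ), ∃ δ > (0 : ℝ), ∀ φ : ℝ → XSp n,
      IsClosedLoopSol f g (uStar g R V) φ → ‖φ 0‖ < δ →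
        ∀ t ≥ (0 : ℝ), ‖φ t‖ < ε) ∧
    (∀ φ : ℝ → XSp n, IsClosedLoopSol f g (uStar g R V) φ →
      Filter.Tendsto φ Filter.atTop (nhds 0)) := by
  classical
  -- Basic facts
  have hVdiff : Differentiable ℝ V := hV.differentiable one_ne_zero
  have hVc : Continuous V := hVdiff.continuous
  have hQnn : ∀ x : XSp n, 0 ≤ Q x := by
    intro x
    by_cases hx : x = 0
    · simp [hx, hQ0]
    · exact le_of_lt (hQpos x hx)
  have hRnn : ∀ u : Fin m → ℝ, 0 ≤ u ⬝ᵥ R.mulVec u := by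
    intro u
    have := hR.posSemidef.dotProduct_mulVec_nonneg u
    simpa using this
  -- any global minimizer of V is 0
  have hmin_eq_zero : ∀ x : XSp n, (∀ y, V x ≤ V y) → x = 0 := by
    intro x hx
    have hloc : IsLocalMin V x := Filter.Eventually.of_forall hx
    have hfd : fderiv ℝ V x = 0 := hloc.fderiv_eq_zero
    have hu : uStar g R V x = 0 := by
      have h0 : (fun j => fderiv ℝ V x (Gcol g x j)) = (0 : Fin m → ℝ) := by
        funext j; rw [hfd]; simp
      simp [uStar, h0]
    have hhjb := hHJB x
    rw [hu, hfd] at hhjb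
    simp at hhjb
    by_contra hx0
    exact absurd hhjb (ne_of_gt (hQpos x hx0))
  -- V attains a global minimum
  obtain ⟨x0, hx0⟩ : ∃ x0 : XSp n, ∀ y, V x0 ≤ V y := by
    obtain ⟨r, hr⟩ := hVrad (V 0 + 1)
    refine hVc.exists_forall_le' 0 ?_
    filter_upwards [tendsto_norm_cocompact_atTop.eventually (Filter.eventually_ge_atTop r)]
      with x hx
    have := hr x hx
    linarith
  have hx00 : x0 = 0 := hmin_eq_zero x0 hx0
  have hV0min : ∀ y, V 0 ≤ V y := hx00 ▸ hx0
  have hVstrict : ∀ x : XSp n, x ≠ 0 → V 0 < V x := by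
    intro x hx
    rcases lt_or_eq_of_le (hV0min x) with h | h
    · exact h
    · exact absurd (hmin_eq_zero x (fun y => h ▸ hV0min y)) hx
  -- key sublevel-set lemma
  have key : ∀ ε : ℝ, 0 < ε → ∃ c : ℝ, 0 < c ∧ ∀ x : XSp n, V x < V 0 + c → ‖x‖ < ε := by
    intro ε hε
    obtain ⟨r, hr⟩ := hVrad (V 0 + 1)
    set A : Set (XSp n) := {x | ε ≤ ‖x‖ ∧ ‖x‖ ≤ max r ε} with hA
    have hAclosed : IsClosed A := by
      have : A = (fun x : XSp n => ‖x‖) ⁻¹' (Set.Icc ε (max r ε)) := by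
        ext x; simp [hA, Set.mem_Icc]
      rw [this]
      exact isClosed_Icc.preimage continuous_norm
    have hAcompact : IsCompact A := by
      have hsub : A ⊆ Metric.closedBall 0 (max r ε) := by
        intro x hx
        rw [Metric.mem_closedBall, dist_zero_right]
        exact hx.2
      exact (isCompact_closedBall _ _).of_isClosed_subset hAclosed hsub
    by_cases hAne : A.Nonempty
    · obtain ⟨a, haA, ha⟩ := hAcompact.exists_isMinOn hAne hVc.continuousOn
      have hane : a ≠ 0 := by
        intro h
        have := haA.1
        rw [h] at this
        simp at this
        linarith
      refine ⟨min 1 (V a - V 0), ?_, ?_⟩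
      · exact lt_min one_pos (by linarith [hVstrict a hane])
      · intro x hx
        by_contra hxe
        push_neg at hxe
        by_cases hxr : ‖x‖ ≤ max r ε
        · have hxA : x ∈ A := ⟨hxe, hxr⟩
          have := ha hxA
          have hle : min 1 (V a - V 0) ≤ V a - V 0 := min_le_right _ _
          simp only [Set.mem_setOf_eq] at this
          linarith
        · push_neg at hxr
          have : V 0 + 1 ≤ V x := hr x (le_of_lt (lt_of_le_of_lt (le_max_left r ε) hxr))
          have hle : min 1 (V a - V 0) ≤ 1 := min_le_left _ _
          linarith
    · refine ⟨1, one_pos, ?_⟩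
      intro x hx
      by_contra hxe
      push_neg at hxe
      by_cases hxr : ‖x‖ ≤ max r ε
      · exact hAne ⟨x, hxe, hxr⟩
      · push_neg at hxr
        have : V 0 + 1 ≤ V x := hr x (le_of_lt (lt_of_le_of_lt (le_max_left r ε) hxr))
        linarith
  -- derivative of V along a solution
  have hderiv : ∀ φ : ℝ → XSp n, IsClosedLoopSol f g (uStar g R V) φ →
      ∀ t ∈ Set.Ici (0 : ℝ), HasDerivWithinAt (fun s => V (φ s))
        (-(Q (φ t) + uStar g R V (φ t) ⬝ᵥ R.mulVec (uStar g R V (φ t)))) (Set.Ici 0) t := by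
    intro φ hφ t ht
    have h1 : HasDerivWithinAt (fun s => V (φ s))
        ((fderiv ℝ V (φ t)) (Fvec f (φ t) + Gapp g (φ t) (uStar g R V (φ t))))
        (Set.Ici 0) t :=
      (hVdiff (φ t)).hasFDerivAt.comp_hasDerivWithinAt t (hφ t ht)
    have h2 : (fderiv ℝ V (φ t)) (Fvec f (φ t) + Gapp g (φ t) (uStar g R V (φ t)))
        = -(Q (φ t) + uStar g R V (φ t) ⬝ᵥ R.mulVec (uStar g R V (φ t))) := by
      have := hHJB (φ t)
      linarith
    rwa [h2] at h1
  -- V is antitone along solutions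
  have hmono : ∀ φ : ℝ → XSp n, IsClosedLoopSol f g (uStar g R V) φ →
      ∀ s ∈ Set.Ici (0 : ℝ), ∀ t, s ≤ t → V (φ t) ≤ V (φ s) := by
    intro φ hφ s hs t hst
    have hanti : AntitoneOn (fun s => V (φ s)) (Set.Ici 0) := by
      refine antitoneOn_aux (hderiv φ hφ) ?_
      intro u hu
      have := hQnn (φ u)
      have := hRnn (uStar g R V (φ u))
      linarith
    exact hanti hs (le_trans hs hst) hst
  constructor
  · -- stability
    intro ε hε
    obtain ⟨c, hc, hcsub⟩ := key ε hε
    have hVcont0 : ContinuousAt V 0 := hVc.continuousAt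
    obtain ⟨δ, hδ, hδball⟩ := Metric.continuousAt_iff.1 hVcont0 c hc
    refine ⟨δ, hδ, ?_⟩
    intro φ hφ hφ0 t ht
    have hVφ0 : V (φ 0) < V 0 + c := by
      have h1 := hδball (by rwa [dist_zero_right])
      rw [Real.dist_eq] at h1
      have h2 := abs_lt.1 h1
      linarith [h2.2]
    have hVt : V (φ t) ≤ V (φ 0) := hmono φ hφ 0 Set.self_mem_Ici t ht
    exact hcsub (φ t) (by linarith)
  · -- attractivity
    intro φ hφ
    set S : Set ℝ := (fun t => V (φ t)) '' Set.Ici 0 with hS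
    have hSne : S.Nonempty := ⟨V (φ 0), 0, Set.self_mem_Ici, rfl⟩
    have hSbdd : BddBelow S := by
      refine ⟨V 0, ?_⟩
      rintro v ⟨t, ht, rfl⟩
      exact hV0min _
    set L : ℝ := sInf S with hL
    have hLge : V 0 ≤ L := le_csInf hSne (by rintro v ⟨t, ht, rfl⟩; exact hV0min _)
    have hLle : ∀ t : ℝ, 0 ≤ t → L ≤ V (φ t) := fun t ht => csInf_le hSbdd ⟨t, ht, rfl⟩
    -- L cannot exceed V 0
    have hLeqV0 : ¬ (V 0 < L) := by
      intro hLV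
      set K : Set (XSp n) := {x | L ≤ V x ∧ V x ≤ V (φ 0)} with hK
      have hφK : ∀ t : ℝ, 0 ≤ t → φ t ∈ K :=
        fun t ht => ⟨hLle t ht, hmono φ hφ 0 Set.self_mem_Ici t ht⟩
      have hKclosed : IsClosed K := by
        have : K = V ⁻¹' Set.Icc L (V (φ 0)) := by
          ext x; simp [hK, Set.mem_Icc]
        rw [this]
        exact isClosed_Icc.preimage hVc
      have hKcompact : IsCompact K := by
        obtain ⟨r, hr⟩ := hVrad (V (φ 0) + 1)
        have hsub : K ⊆ Metric.closedBall 0 (max r 0) := by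
          intro x hx
          rw [Metric.mem_closedBall, dist_zero_right]
          by_contra hxr
          push_neg at hxr
          have : V (φ 0) + 1 ≤ V x := hr x (le_of_lt (lt_of_le_of_lt (le_max_left r 0) hxr))
          linarith [hx.2]
        exact (isCompact_closedBall _ _).of_isClosed_subset hKclosed hsub
      have hKne : K.Nonempty := ⟨φ 0, hφK 0 le_rfl⟩
      obtain ⟨b, hbK, hb⟩ := hKcompact.exists_isMinOn hKne hQcont.continuousOn
      have hbne : b ≠ 0 := by
        intro h
        rw [h] at hbK
        have := hbK.1
        linarith
      set μ : ℝ := Q b with hμ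
      have hμpos : 0 < μ := hQpos b hbne
      have hanti2 : ∀ t : ℝ, 0 ≤ t → V (φ t) + μ * t ≤ V (φ 0) := by
        intro t ht
        have h1 : AntitoneOn (fun s => V (φ s) + μ * s) (Set.Ici 0) := by
          refine antitoneOn_aux (d := fun s =>
            -(Q (φ s) + uStar g R V (φ s) ⬝ᵥ R.mulVec (uStar g R V (φ s))) + μ) ?_ ?_
          · intro u hu
            have hlin : HasDerivWithinAt (fun s => μ * s) μ (Set.Ici 0) u := by
              simpa using (hasDerivWithinAt_id u (Set.Ici (0:ℝ))).const_mul μ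
            exact (hderiv φ hφ u hu).add hlin
          · intro u hu
            have hQμ : μ ≤ Q (φ u) := hb (hφK u hu)
            have hrn := hRnn (uStar g R V (φ u))
            linarith
        have := h1 (Set.self_mem_Ici) ht ht
        simpa using this
      have h1 : 0 ≤ (V (φ 0) - V 0) / μ :=
        div_nonneg (by linarith [hV0min (φ 0)]) (le_of_lt hμpos)
      have hT0 : (0 : ℝ) ≤ (V (φ 0) - V 0) / μ + 1 := by linarith
      have h2 := hanti2 _ hT0
      have h3 : μ * ((V (φ 0) - V 0) / μ + 1) = (V (φ 0) - V 0) + μ := by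
        field_simp
      have h5 := hLle _ hT0
      rw [h3] at h2
      linarith
    push_neg at hLeqV0
    rw [Metric.tendsto_atTop]
    intro ε hε
    obtain ⟨c, hc, hcsub⟩ := key ε hε
    have hex : ∃ v ∈ S, v < V 0 + c := by
      apply exists_lt_of_csInf_lt hSne
      calc L ≤ V 0 := hLeqV0
        _ < V 0 + c := by linarith
    obtain ⟨v, ⟨t0, ht0, rfl⟩, hv⟩ := hex
    refine ⟨t0, ?_⟩
    intro t ht
    rw [dist_zero_right]
    have h1 : V (φ t) ≤ V (φ t0) := hmono φ hφ t0 ht0 t ht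
    exact hcsub (φ t) (by linarith)
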